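/- Let G be a finite 2-connected outerplanar graph not isomorphic to K^3. Then an edge e of G lies on the (unique) Hamilton cycle of G if and only if e is 2-contractible, i.e., the graph G/e obtained by contracting e is 2-connected. -/

import Mathlib

open SimpleGraph

universe u w

/-- Outerplanar: the vertices can be placed (injectively) on a line — equivalently on
a circle, with all vertices on the outer face boundary — so that no two edges cross. -/
def IsOuterplanar {V : Type u} (G : SimpleGraph V) : Prop :=
  ∃ f : V → ℕ, Function.Injective f ∧
    ∀ a b c d : V, G.Adj a b → G.Adj c d →
      ¬(f a < f c ∧ f c < f b ∧ f b < f d)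

/-- 2-connected: at least three vertices, and deleting any single vertex leaves a
connected graph. -/
def TwoConnected {V : Type u} (G : SimpleGraph V) : Prop :=
  3 ≤ Nat.card V ∧ ∀ v : V, (G.induce {u | u ≠ v}).Connected

/-- The contraction `G/uv`: contract the edge `uv` onto the vertex `u`, suppressing
parallel edges. -/
def contractEdge {V : Type u} (G : SimpleGraph V) (u v : V) :
    SimpleGraph {w : V // w ≠ v} where
  Adj a b := (a : V) ≠ (b : V) ∧
    (G.Adj a b ∨ ((a : V) = u ∧ G.Adj v b) ∨ ((b : V) = u ∧ G.Adj a v))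
  symm := by
    constructor
    rintro a b ⟨hne, h | ⟨ha, hb⟩ | ⟨hb, ha⟩⟩
    · exact ⟨hne.symm, Or.inl h.symm⟩
    · exact ⟨hne.symm, Or.inr (Or.inr ⟨ha, hb.symm⟩)⟩
    · exact ⟨hne.symm, Or.inr (Or.inl ⟨hb, ha.symm⟩)⟩
  loopless := by
    constructor
    rintro a ⟨h, -⟩
    exact h rfl

open Walk

section Helpers
variable {α : Type*} {β : Type*}

private lemma walk_invariant {H : SimpleGraph α} (P : α → Prop)
    (hstep : ∀ g h, H.Adj g h → P g → P h) :
    ∀ {c d : α}, H.Walk c d → P c → P d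
  | _, _, .nil, hc => hc
  | _, _, .cons h q, hc => walk_invariant P hstep q (hstep _ _ h hc)

private lemma reach_of_walk {A : SimpleGraph α} {B : SimpleGraph β} (m : α → β)
    (hstep : ∀ a b, A.Adj a b → m a = m b ∨ B.Adj (m a) (m b)) :
    ∀ {c d : α}, A.Walk c d → B.Reachable (m c) (m d)
  | _, _, .nil => .refl _
  | _, _, .cons h q => by
      rcases hstep _ _ h with he | ha
      · rw [he]; exact reach_of_walk m hstep q
      · exact ha.reachable.trans (reach_of_walk m hstep q)

private lemma connected_of_map {A : SimpleGraph α} {B : SimpleGraph β} (m : α → β)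
    (hsurj : Function.Surjective m)
    (hstep : ∀ a b, A.Adj a b → m a = m b ∨ B.Adj (m a) (m b))
    (hA : A.Connected) : B.Connected := by
  have hne : Nonempty β := hA.nonempty.map m
  rw [connected_iff]
  refine ⟨fun b1 b2 => ?_, hne⟩
  obtain ⟨a1, rfl⟩ := hsurj b1
  obtain ⟨a2, rfl⟩ := hsurj b2
  obtain ⟨w⟩ := hA.preconnected a1 a2
  exact reach_of_walk m hstep w

private lemma reach_in_induce {V : Type u} {G : SimpleGraph V} (S : Set V) :
    ∀ {c d : V} (s : G.Walk c d) (h : ∀ w ∈ s.support, w ∈ S) (w : V) (hw : w ∈ s.support),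
      (G.induce S).Reachable ⟨c, h c s.start_mem_support⟩ ⟨w, h w hw⟩
  | c, _, .nil, h, w, hw => by
      have hwc : w = c := by simpa using hw
      subst hwc
      exact Reachable.refl _
  | c, d, @Walk.cons _ _ _ e _ h' q, h, w, hw => by
      rcases (show w = c ∨ w ∈ q.support by simpa using hw) with rfl | hw'
      · exact Reachable.refl _
      · have hadj : (G.induce S).Adj ⟨c, h _ (start_mem_support _)⟩
            ⟨e, h e (by simp)⟩ := h'
        exact hadj.reachable.trans
          (reach_in_induce S q (fun w hw => h w (by simp [hw])) w hw')

end Helpers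

section CycleLemmas
variable {V : Type u} {G : SimpleGraph V}

private lemma isCycle_reverse {x : V} {q : G.Walk x x} (hq : q.IsCycle) : q.reverse.IsCycle := by
  rw [isCycle_def]
  refine ⟨hq.isTrail.reverse _, fun h => hq.ne_nil (by simpa using congrArg Walk.reverse h), ?_⟩
  have hnn : ¬ q.Nil := hq.not_nil
  have hsup : q.support = x :: q.support.tail := by
    rw [← Walk.support_tail_of_not_nil q hnn, Walk.cons_support_tail hnn]
  have htne : q.support.tail ≠ [] := by
    intro h
    apply hnn
    rw [nil_iff_support_eq, hsup, h]
  have hlast : q.support.tail.getLast htne = x := by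
    rw [List.getLast_tail]
    exact q.getLast_support
  have hdecomp : q.support.tail.dropLast ++ [x] = q.support.tail := by
    conv_rhs => rw [← List.dropLast_append_getLast htne]
    rw [hlast]
  have hnd : q.support.tail.Nodup := ((isCycle_def q).mp hq).2.2
  rw [support_reverse, hsup, ← hdecomp]
  simp only [List.reverse_cons, List.reverse_append]
  rw [← hdecomp] at hnd
  have h1 : q.support.tail.dropLast.Nodup := (List.nodup_append'.mp hnd).1
  have h2 : x ∉ q.support.tail.dropLast := by
    intro hx
    exact (List.nodup_append'.mp hnd).2.2 hx (by simp)  -- disjoint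
  show (([x].reverse ++ q.support.tail.dropLast.reverse) ++ [x]).tail.Nodup
  simp only [List.reverse_singleton, List.singleton_append, List.cons_append, List.tail_cons]
  rw [List.nodup_append']
  refine ⟨List.nodup_reverse.mpr h1, List.nodup_singleton x, ?_⟩
  intro a ha hb
  rw [List.mem_singleton] at hb
  subst hb
  exact h2 (List.mem_reverse.mp ha)

end CycleLemmas
section CycleLemmas2
variable {V : Type u} {G : SimpleGraph V}

private lemma edge_end_eq_penult {e : V} :
    ∀ {d : V} (r : G.Walk d e), r.support.Nodup → ∀ {y : V}, s(e, y) ∈ r.edges →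
      y = r.getVert (r.length - 1)
  | _, .nil, _, _, h => absurd h (by simp)
  | d, @Walk.cons _ _ _ b _ h' r', hnd, y, h => by
      rw [support_cons, List.nodup_cons] at hnd
      obtain ⟨hd, hnd'⟩ := hnd
      rw [edges_cons, List.mem_cons] at h
      rcases h with heq | hmem
      · rcases Sym2.eq_iff.mp heq with ⟨he, hy⟩ | ⟨he, hy⟩
        · exact absurd (he ▸ r'.end_mem_support) hd
        · subst hy
          subst he
          have hr' : r' = Walk.nil := isPath_iff_eq_nil.mp (IsPath.mk' hnd')
          subst hr'
          simp [Walk.getVert]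
      · have hlen : 0 < r'.length := by
          rw [← length_edges]
          exact List.length_pos_of_mem hmem
        obtain ⟨n, hn⟩ := Nat.exists_eq_succ_of_ne_zero hlen.ne'
        have ih := edge_end_eq_penult r' hnd' hmem
        rw [length_cons, hn]
        rw [hn] at ih
        simpa [getVert_cons_succ] using ih

private lemma cycle_edge_endpoints {x : V} {q : G.Walk x x} (hq : q.IsCycle) {y : V}
    (hy : s(x, y) ∈ q.edges) : y = q.getVert 1 ∨ y = q.getVert (q.length - 1) := by
  have hnn : ¬ q.Nil := hq.not_nil
  have h3 : 3 ≤ q.length := hq.three_le_length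
  rw [← cons_tail_eq q hnn, edges_cons, List.mem_cons] at hy
  rcases hy with heq | hmem
  · rcases Sym2.eq_iff.mp heq with ⟨-, hy⟩ | ⟨hx, hy⟩
    · exact Or.inl hy
    · exact absurd hx (q.adj_snd hnn).ne
  · right
    have hnd : q.tail.support.Nodup := by
      rw [support_tail_of_not_nil q hnn]
      exact ((isCycle_def q).mp hq).2.2
    have := edge_end_eq_penult q.tail hnd hmem
    rw [getVert_tail q] at this
    have hlt : q.tail.length = q.length - 1 := by
      have := length_tail_add_one hnn
      omega
    rw [hlt] at this
    rw [this]
    congr 1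
    omega

end CycleLemmas2
section CycleLemmas3
variable {V : Type u} {G : SimpleGraph V}

private lemma first_edge_mem {d e : V} (r : G.Walk d e) (hnn : ¬ r.Nil) :
    s(d, r.getVert 1) ∈ r.edges := by
  have h := cons_tail_eq r hnn
  have h2 : s(d, r.getVert 1) ∈ (Walk.cons (r.adj_snd hnn) r.tail).edges := by
    rw [edges_cons]
    exact List.mem_cons_self
  rwa [h] at h2

private lemma last_edge_mem {d e : V} (r : G.Walk d e) (hnn : ¬ r.Nil) :
    s(e, r.getVert (r.length - 1)) ∈ r.edges := by
  have h1 : s(e, r.reverse.getVert 1) ∈ r.reverse.edges :=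
    first_edge_mem r.reverse (by rw [nil_iff_length_eq, length_reverse]; exact
      (not_nil_iff_lt_length.mp hnn).ne')
  rw [getVert_reverse] at h1
  rw [edges_reverse, List.mem_reverse] at h1
  exact h1

private lemma cycle_neighbors_ne {x : V} {q : G.Walk x x} (hq : q.IsCycle) :
    q.getVert 1 ≠ q.getVert (q.length - 1) := by
  intro hcontra
  have hnn : ¬ q.Nil := hq.not_nil
  have h3 : 3 ≤ q.length := hq.three_le_length
  have hnd : q.edges.Nodup := hq.isCircuit.isTrail.edges_nodup
  have hconseq : q.edges = s(x, q.getVert 1) :: q.tail.edges := by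
    conv_lhs => rw [← cons_tail_eq q hnn]
    rw [edges_cons]
  have htail_nn : ¬ q.tail.Nil := by
    rw [nil_iff_length_eq]
    have := length_tail_add_one hnn
    omega
  have hlast : s(x, q.tail.getVert (q.tail.length - 1)) ∈ q.tail.edges :=
    last_edge_mem q.tail htail_nn
  rw [getVert_tail q] at hlast
  have hlen : q.tail.length - 1 + 1 = q.length - 1 := by
    have := length_tail_add_one hnn
    omega
  rw [hlen] at hlast
  rw [hconseq, List.nodup_cons] at hnd
  rw [← hcontra] at hlast
  exact hnd.1 hlast

/-- The two (distinct) neighbors of a vertex on a hamiltonian cycle characterize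
membership of incident edges. -/
private lemma hamiltonian_two_neighbors [DecidableEq V] {a : V} {p : G.Walk a a}
    (hp : p.IsHamiltonianCycle) (u : V) :
    ∃ y1 y2 : V, y1 ≠ y2 ∧ ∀ z : V, (s(u, z) ∈ p.edges ↔ (z = y1 ∨ z = y2)) := by
  have hu : u ∈ p.support := hp.mem_support u
  set q := p.rotate u hu with hqdef
  have hq : q.IsCycle := hp.isCycle.rotate hu
  have hedges : ∀ e, e ∈ q.edges ↔ e ∈ p.edges :=
    fun e => (rotate_edges p u hu).perm.mem_iff
  refine ⟨q.getVert 1, q.getVert (q.length - 1), cycle_neighbors_ne hq, fun z => ?_⟩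
  constructor
  · intro hz
    exact cycle_edge_endpoints hq ((hedges _).mpr hz)
  · rintro (rfl | rfl)
    · exact (hedges _).mp (first_edge_mem q hq.not_nil)
    · exact (hedges _).mp (last_edge_mem q hq.not_nil)

end CycleLemmas3
section W
variable {V : Type u} {G : SimpleGraph V}

/-- Deleting both endpoints of an edge of a hamiltonian cycle leaves a connected graph. -/
private lemma cycle_path_connected [DecidableEq V] {a : V} {p : G.Walk a a}
    (hp : p.IsHamiltonianCycle) {x y : V} (hxy : s(x, y) ∈ p.edges) :
    (G.induce {w | w ≠ x ∧ w ≠ y}).Connected := by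
  have hx : x ∈ p.support := hp.mem_support x
  have hq0 : (p.rotate x hx).IsCycle := hp.isCycle.rotate hx
  have hmem : s(x, y) ∈ (p.rotate x hx).edges := (rotate_edges p x hx).perm.mem_iff.mpr hxy
  have hcovq : ∀ v, v ∈ (p.rotate x hx).support := by
    intro v
    have h1 : v ∈ p.support.tail := by
      have := hp.isHamiltonian_tail.mem_support v
      rwa [support_tail_of_not_nil p hp.isCycle.not_nil] at this
    exact List.mem_of_mem_tail ((support_rotate p x hx).perm.mem_iff.mpr h1)
  obtain ⟨q, hq, hy1, hcov⟩ : ∃ q : G.Walk x x, q.IsCycle ∧ y = q.getVert 1 ∧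
      ∀ v, v ∈ q.support := by
    rcases cycle_edge_endpoints hq0 hmem with h | h
    · exact ⟨p.rotate x hx, hq0, h, hcovq⟩
    · refine ⟨(p.rotate x hx).reverse, isCycle_reverse hq0, ?_, ?_⟩
      · rw [getVert_reverse]
        simpa using h
      · intro v
        rw [support_reverse, List.mem_reverse]
        exact hcovq v
  subst hy1
  have h3 : 3 ≤ q.length := hq.three_le_length
  have hnn : ¬ q.Nil := hq.not_nil
  set r := q.tail with hr
  have hrsup : r.support = q.support.tail := support_tail_of_not_nil q hnn
  have hrnodup : r.support.Nodup := by
    rw [hrsup]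
    exact ((isCycle_def q).mp hq).2.2
  have hrcov : ∀ v, v ∈ r.support := by
    intro v
    rcases eq_or_ne v x with rfl | hvx
    · exact r.end_mem_support
    · have hv := hcov v
      rw [← cons_support_tail hnn] at hv
      exact (List.mem_cons.mp hv).resolve_left hvx
  have hrlen : 2 ≤ r.length := by
    have h := length_tail_add_one hnn
    rw [← hr] at h
    omega
  have hr2nn : ¬ r.reverse.Nil := by
    rw [nil_iff_length_eq, length_reverse]
    omega
  set r3 := r.reverse.tail with hr3
  have hr3sup : x :: r3.support = r.reverse.support := cons_support_tail hr2nn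
  have hr3nodup : (x :: r3.support).Nodup := by
    rw [hr3sup, support_reverse]
    exact List.nodup_reverse.mpr hrnodup
  have hxnotin : x ∉ r3.support := (List.nodup_cons.mp hr3nodup).1
  have hr3cov : ∀ v, v ≠ x → v ∈ r3.support := by
    intro v hvx
    have hv : v ∈ r.reverse.support := by
      rw [support_reverse, List.mem_reverse]
      exact hrcov v
    rw [← hr3sup] at hv
    exact (List.mem_cons.mp hv).resolve_left hvx
  have hr3len : 1 ≤ r3.length := by
    have h := length_tail_add_one hr2nn
    rw [← hr3, length_reverse] at h
    omega
  have hr4nn : ¬ r3.reverse.Nil := by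
    rw [nil_iff_length_eq, length_reverse]
    omega
  set r5 := r3.reverse.tail with hr5
  have hr5sup : (q.getVert 1) :: r5.support = r3.reverse.support :=
    cons_support_tail hr4nn
  have hr5nodup : ((q.getVert 1) :: r5.support).Nodup := by
    rw [hr5sup, support_reverse]
    exact List.nodup_reverse.mpr (List.nodup_cons.mp hr3nodup).2
  have hynotin : (q.getVert 1) ∉ r5.support := (List.nodup_cons.mp hr5nodup).1
  have hr5cov : ∀ v, v ≠ x → v ≠ q.getVert 1 → v ∈ r5.support := by
    intro v hvx hvy
    have hv : v ∈ r3.reverse.support := by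
      rw [support_reverse, List.mem_reverse]
      exact hr3cov v hvx
    rw [← hr5sup] at hv
    exact (List.mem_cons.mp hv).resolve_left hvy
  have hr5sub : ∀ v ∈ r5.support, v ∈ {w | w ≠ x ∧ w ≠ q.getVert 1} := by
    intro v hv
    constructor
    · intro hveq
      apply hxnotin
      have hv2 : v ∈ r3.reverse.support := by
        rw [← hr5sup]
        exact List.mem_cons_of_mem _ hv
      rw [support_reverse, List.mem_reverse] at hv2
      rwa [hveq] at hv2
    · intro hveq
      rw [hveq] at hv
      exact hynotin hv
  rw [connected_iff]
  constructor
  · rintro ⟨w1, hw1⟩ ⟨w2, hw2⟩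
    have m1 : w1 ∈ r5.support := hr5cov w1 hw1.1 hw1.2
    have m2 : w2 ∈ r5.support := hr5cov w2 hw2.1 hw2.2
    exact (reach_in_induce _ r5 hr5sub w1 m1).symm.trans (reach_in_induce _ r5 hr5sub w2 m2)
  · exact ⟨⟨_, hr5sub _ r5.start_mem_support⟩⟩

end W
section Crossing
variable {V : Type u} {G : SimpleGraph V} [DecidableEq V]

private lemma cycle_edge_no_sandwich {f : V → ℕ} (hfinj : Function.Injective f)
    (hcross : ∀ a b c d : V, G.Adj a b → G.Adj c d → ¬(f a < f c ∧ f c < f b ∧ f b < f d))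
    {a : V} {p : G.Walk a a} (hp : p.IsHamiltonianCycle) {x y : V} (hxy : s(x, y) ∈ p.edges)
    {z t : V} (hz : f x < f z ∧ f z < f y) (ht : f t < f x ∨ f y < f t) : False := by
  have hadjxy : G.Adj x y := p.adj_of_mem_edges hxy
  have hzx : z ≠ x := fun h => by subst h; omega
  have hzy : z ≠ y := fun h => by subst h; omega
  have htx : t ≠ x := fun h => by subst h; omega
  have hty : t ≠ y := fun h => by subst h; omega
  have hconn := cycle_path_connected hp hxy
  have hstep : ∀ g h : {w : V | w ≠ x ∧ w ≠ y}, (G.induce {w | w ≠ x ∧ w ≠ y}).Adj g h →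
      (f x < f g.1 ∧ f g.1 < f y) → (f x < f h.1 ∧ f h.1 < f y) := by
    rintro ⟨g, hgx, hgy⟩ ⟨h, hhx, hhy⟩ hadj hPg
    have hadj' : G.Adj g h := hadj
    simp only at hPg ⊢
    by_contra hPh
    have h1 : f h ≠ f x := fun hc => hhx (hfinj hc)
    have h2 : f h ≠ f y := fun hc => hhy (hfinj hc)
    rcases (show f h < f x ∨ f y < f h by omega) with hlt | hgt
    · exact hcross h g x y hadj'.symm hadjxy ⟨hlt, hPg.1, hPg.2⟩
    · exact hcross x y g h hadjxy hadj' ⟨hPg.1, hPg.2, hgt⟩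
  obtain ⟨w⟩ := hconn.preconnected ⟨z, hzx, hzy⟩ ⟨t, htx, hty⟩
  have hPt := walk_invariant (fun s : {w : V | w ≠ x ∧ w ≠ y} => f x < f s.1 ∧ f s.1 < f y)
    hstep w hz
  simp only at hPt
  omega

private lemma neighbor_classification {f : V → ℕ} (hfinj : Function.Injective f)
    (hcross : ∀ a b c d : V, G.Adj a b → G.Adj c d → ¬(f a < f c ∧ f c < f b ∧ f b < f d))
    {a : V} {p : G.Walk a a} (hp : p.IsHamiltonianCycle) {u y : V}
    (hy : s(u, y) ∈ p.edges) :
    (f y < f u ∧ ∀ w, ¬(f y < f w ∧ f w < f u)) ∨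
    (f u < f y ∧ ∀ w, ¬(f u < f w ∧ f w < f y)) ∨
    (∀ w, f u ≤ f w ∧ f w ≤ f y) ∨ (∀ w, f y ≤ f w ∧ f w ≤ f u) := by
  have hadj : G.Adj u y := p.adj_of_mem_edges hy
  have hne : f u ≠ f y := fun h => hadj.ne (hfinj h)
  rcases lt_or_gt_of_ne hne with hlt | hgt
  · by_contra hcon
    push_neg at hcon
    obtain ⟨-, h2, h3, -⟩ := hcon
    obtain ⟨z, hz⟩ := h2 hlt
    obtain ⟨t, ht⟩ := h3
    refine cycle_edge_no_sandwich hfinj hcross hp hy hz (t := t) ?_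
    rcases lt_or_ge (f t) (f u) with h | h
    · exact Or.inl h
    · exact Or.inr (ht h)
  · rw [Sym2.eq_swap] at hy
    by_contra hcon
    push_neg at hcon
    obtain ⟨h1, -, -, h4⟩ := hcon
    obtain ⟨z, hz⟩ := h1 hgt
    obtain ⟨t, ht⟩ := h4
    refine cycle_edge_no_sandwich hfinj hcross hp hy hz (t := t) ?_
    rcases lt_or_ge (f t) (f y) with h | h
    · exact Or.inl h
    · exact Or.inr (ht h)

private lemma chord_sandwich {f : V → ℕ} (hfinj : Function.Injective f)
    (hcross : ∀ a b c d : V, G.Adj a b → G.Adj c d → ¬(f a < f c ∧ f c < f b ∧ f b < f d))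
    {a : V} {p : G.Walk a a} (hp : p.IsHamiltonianCycle) {u v : V}
    (huv : G.Adj u v) (hne : s(u, v) ∉ p.edges) (hlt : f u < f v) :
    (∃ z, f u < f z ∧ f z < f v) ∧ (∃ t, f t < f u ∨ f v < f t) := by
  obtain ⟨y1, y2, hy12, hiff⟩ := hamiltonian_two_neighbors hp u
  have he1 : s(u, y1) ∈ p.edges := (hiff y1).mpr (Or.inl rfl)
  have he2 : s(u, y2) ∈ p.edges := (hiff y2).mpr (Or.inr rfl)
  have hy1v : y1 ≠ v := fun h => hne (h ▸ he1)
  have hy2v : y2 ≠ v := fun h => hne (h ▸ he2)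
  have hfy1v : f y1 ≠ f v := fun h => hy1v (hfinj h)
  have hfy2v : f y2 ≠ f v := fun h => hy2v (hfinj h)
  have hc1 := neighbor_classification hfinj hcross hp he1
  have hc2 := neighbor_classification hfinj hcross hp he2
  have hfy12 : f y1 ≠ f y2 := fun h => hy12 (hfinj h)
  constructor
  · by_contra hnoz
    push_neg at hnoz
    -- hnoz : ∀ z, f u < f z → f v ≤ f z
    have elim : ∀ y, y ≠ v → f y ≠ f v →
        ((f y < f u ∧ ∀ w, ¬(f y < f w ∧ f w < f u)) ∨
        (f u < f y ∧ ∀ w, ¬(f u < f w ∧ f w < f y)) ∨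
        (∀ w, f u ≤ f w ∧ f w ≤ f y) ∨ (∀ w, f y ≤ f w ∧ f w ≤ f u)) →
        ((f y < f u ∧ ∀ w, ¬(f y < f w ∧ f w < f u)) ∨ (∀ w, f u ≤ f w ∧ f w ≤ f y)) := by
      intro y hyv hfyv hcl
      rcases hcl with h | h | h | h
      · exact Or.inl h
      · -- f u < f y with nothing between u and y : impossible
        exfalso
        rcases lt_or_gt_of_ne hfyv with hvy | hvy
        · -- f y < f v : then y is between u and v
          have := hnoz y h.1
          omega
        · -- f v < f y : then v is between u and y
          exact h.2 v ⟨hlt, hvy⟩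
      · exact Or.inr h
      · exfalso
        have := (h v).2
        omega
    rcases elim y1 hy1v hfy1v hc1 with d1 | d1 <;> rcases elim y2 hy2v hfy2v hc2 with d2 | d2
    · -- both predecessors : contradiction with y1 ≠ y2
      rcases lt_or_gt_of_ne hfy12 with h | h
      · exact d1.2 y2 ⟨h, d2.1⟩
      · exact d2.2 y1 ⟨h, d1.1⟩
    · have := (d2 y1).1
      omega
    · have := (d1 y2).1
      omega
    · have l1 := (d1 y2).2
      have l2 := (d2 y1).2
      omega
  · by_contra hnot
    push_neg at hnot
    -- hnot : ∀ t, f u ≤ f t ∧ f t ≤ f v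
    have elim : ∀ y, y ≠ v → f y ≠ f v →
        ((f y < f u ∧ ∀ w, ¬(f y < f w ∧ f w < f u)) ∨
        (f u < f y ∧ ∀ w, ¬(f u < f w ∧ f w < f y)) ∨
        (∀ w, f u ≤ f w ∧ f w ≤ f y) ∨ (∀ w, f y ≤ f w ∧ f w ≤ f u)) →
        (f u < f y ∧ ∀ w, ¬(f u < f w ∧ f w < f y)) := by
      intro y hyv hfyv hcl
      rcases hcl with h | h | h | h
      · have := (hnot y).1
        omega
      · exact h
      · exfalso
        have l1 := (h v).2
        have l2 := (hnot y).2
        omega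
      · exfalso
        have := (hnot v).1
        have := (h v).2
        omega
    have d1 := elim y1 hy1v hfy1v hc1
    have d2 := elim y2 hy2v hfy2v hc2
    rcases lt_or_gt_of_ne hfy12 with h | h
    · exact d2.2 y1 ⟨d1.1, h⟩
    · exact d1.2 y2 ⟨d2.1, h⟩

end Crossing

/-- In a finite 2-connected outerplanar graph other than `K³`, an edge
lies on the (unique) Hamilton cycle iff it is 2-contractible. -/
theorem stmt_8 {V : Type u} [Fintype V] [DecidableEq V] (G : SimpleGraph V) (ho : IsOuterplanar G)
    (h2 : TwoConnected G) (hK3 : ¬ Nonempty (G ≃g completeGraph (Fin 3)))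
    (a : V) (p : G.Walk a a) (hp : p.IsHamiltonianCycle) :
    ∀ u v : V, G.Adj u v → (s(u, v) ∈ p.edges ↔ TwoConnected (contractEdge G u v)) := by
  obtain ⟨f, hfinj, hcross⟩ := ho
  have hcard3 : 3 ≤ Fintype.card V := by
    have h := h2.1
    rwa [Nat.card_eq_fintype_card] at h
  have hcard4 : 4 ≤ Fintype.card V := by
    by_contra hlt
    have hc3 : Fintype.card V = 3 := by omega
    apply hK3
    have hadjall : ∀ x y : V, x ≠ y → G.Adj x y := by
      intro x y hxy
      obtain ⟨y1, y2, h12, hiff⟩ := hamiltonian_two_neighbors hp x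
      have ha1 : G.Adj x y1 := p.adj_of_mem_edges ((hiff y1).mpr (Or.inl rfl))
      have ha2 : G.Adj x y2 := p.adj_of_mem_edges ((hiff y2).mpr (Or.inr rfl))
      rcases eq_or_ne y y1 with rfl | hyy1
      · exact ha1
      rcases eq_or_ne y y2 with rfl | hyy2
      · exact ha2
      exfalso
      have hcardle : ({x, y, y1, y2} : Finset V).card ≤ 3 := hc3 ▸ Finset.card_le_univ _
      have hceq : ({x, y, y1, y2} : Finset V).card = 4 := by
        rw [Finset.card_insert_of_notMem (by simp [hxy, ha1.ne, ha2.ne]),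
            Finset.card_insert_of_notMem (by simp [hyy1, hyy2]),
            Finset.card_insert_of_notMem (by simp [h12]),
            Finset.card_singleton]
      omega
    have e : V ≃ Fin 3 := Fintype.equivFinOfCardEq hc3
    refine ⟨⟨e, @fun x y => ?_⟩⟩
    simp only [completeGraph, top_adj, ne_eq, EmbeddingLike.apply_eq_iff_eq]
    exact ⟨fun h => hadjall x y h, fun h => h.ne⟩
  intro u v huv
  constructor
  · -- an edge of the hamiltonian cycle is 2-contractible
    intro hmem
    constructor
    · have hcv : Fintype.card {w : V // w ≠ v} = Fintype.card V - 1 := by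
        have h := Fintype.card_subtype_compl (fun w : V => w = v)
        simpa [Fintype.card_subtype_eq] using h
      rw [Nat.card_eq_fintype_card, hcv]
      omega
    · intro w
      by_cases hwu : (w : V) = u
      · -- deleting the contracted vertex: use the hamiltonian path
        have hconn := cycle_path_connected hp hmem
        refine connected_of_map (A := G.induce {t | t ≠ u ∧ t ≠ v})
          (fun z => ⟨⟨z.1, z.2.2⟩, fun h => z.2.1 ((congrArg Subtype.val h).trans hwu)⟩)
          ?_ ?_ hconn
        · rintro ⟨⟨t, htv⟩, htw⟩
          have htu : t ≠ u := by
            intro h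
            exact htw (Subtype.ext (h.trans hwu.symm))
          exact ⟨⟨t, htu, htv⟩, rfl⟩
        · rintro z1 z2 hadj
          have hadj' : G.Adj z1.1 z2.1 := hadj
          exact Or.inr ⟨hadj'.ne, Or.inl hadj'⟩
      · -- deleting another vertex: use 2-connectedness of G
        have hconn := h2.2 (w : V)
        refine connected_of_map (A := G.induce {t | t ≠ (w : V)})
          (fun z => if hz : (z : V) = v
            then ⟨⟨u, huv.ne⟩, fun h => hwu (congrArg Subtype.val h).symm⟩
            else ⟨⟨z.1, hz⟩, fun h => z.2 (congrArg Subtype.val h)⟩)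
          ?_ ?_ hconn
        · rintro ⟨⟨t, htv⟩, htw⟩
          have htw' : t ≠ (w : V) := fun h => htw (Subtype.ext h)
          refine ⟨⟨t, htw'⟩, ?_⟩
          simp only [dif_neg htv]
        · rintro ⟨z1, hz1⟩ ⟨z2, hz2⟩ hadj
          have hadj' : G.Adj z1 z2 := hadj
          beta_reduce
          split_ifs with hA hB hB
          · exact absurd (hA.trans hB.symm) hadj'.ne
          · by_cases h2' : z2 = u
            · exact Or.inl (Subtype.ext (Subtype.ext h2'.symm))
            · refine Or.inr ⟨fun h => h2' h.symm, Or.inr (Or.inl ⟨rfl, ?_⟩)⟩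
              have hA' : z1 = v := hA
              exact hA' ▸ hadj'
          · by_cases h1u : z1 = u
            · exact Or.inl (Subtype.ext (Subtype.ext h1u))
            · refine Or.inr ⟨h1u, Or.inr (Or.inr ⟨rfl, ?_⟩)⟩
              have hB' : z2 = v := hB
              exact hB' ▸ hadj'
          · exact Or.inr ⟨hadj'.ne, Or.inl hadj'⟩
  · -- a 2-contractible edge lies on the hamiltonian cycle
    intro hTC
    by_contra hmem
    have hfuv : f u ≠ f v := fun h => huv.ne (hfinj h)
    obtain ⟨⟨z, hz⟩, t, ht⟩ :
        (∃ z, (f u < f z ∧ f z < f v) ∨ (f v < f z ∧ f z < f u)) ∧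
        (∃ t, (f t < f u ∧ f t < f v) ∨ (f u < f t ∧ f v < f t)) := by
      rcases lt_or_gt_of_ne hfuv with hlt | hgt
      · obtain ⟨⟨z, hz⟩, t, ht⟩ := chord_sandwich hfinj hcross hp huv hmem hlt
        exact ⟨⟨z, Or.inl hz⟩, ⟨t, by omega⟩⟩
      · have hmem' : s(v, u) ∉ p.edges := by rwa [Sym2.eq_swap]
        obtain ⟨⟨z, hz⟩, t, ht⟩ := chord_sandwich hfinj hcross hp huv.symm hmem' hgt
        exact ⟨⟨z, Or.inr hz⟩, ⟨t, by omega⟩⟩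
    have hzu : z ≠ u := fun h => by subst h; omega
    have hzv : z ≠ v := fun h => by subst h; omega
    have htu : t ≠ u := fun h => by subst h; omega
    have htv : t ≠ v := fun h => by subst h; omega
    have hconn := hTC.2 ⟨u, huv.ne⟩
    have hstep : ∀ g h : {x : {w : V // w ≠ v} | x ≠ ⟨u, huv.ne⟩},
        ((contractEdge G u v).induce {x | x ≠ ⟨u, huv.ne⟩}).Adj g h →
        ((f u < f g.1.1 ∧ f g.1.1 < f v) ∨ (f v < f g.1.1 ∧ f g.1.1 < f u)) →
        ((f u < f h.1.1 ∧ f h.1.1 < f v) ∨ (f v < f h.1.1 ∧ f h.1.1 < f u)) := by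
      rintro g h hadj hPg
      have hgu : g.1.1 ≠ u := fun hc => g.2 (Subtype.ext hc)
      have hhu : h.1.1 ≠ u := fun hc => h.2 (Subtype.ext hc)
      have hadj' : (contractEdge G u v).Adj g.1 h.1 := hadj
      obtain ⟨hne', hor⟩ := hadj'
      have hGadj : G.Adj g.1.1 h.1.1 := by
        rcases hor with hO | ⟨hO, -⟩ | ⟨hO, -⟩
        · exact hO
        · exact absurd hO hgu
        · exact absurd hO hhu
      by_contra hPh
      have hh1 : f h.1.1 ≠ f u := fun hc => hhu (hfinj hc)
      have hh2 : f h.1.1 ≠ f v := fun hc => h.1.2 (hfinj hc)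
      rcases (show (f h.1.1 < f u ∧ f h.1.1 < f v) ∨ (f u < f h.1.1 ∧ f v < f h.1.1) by
        omega) with hlo | hhi
      · rcases hPg with hPg | hPg
        · exact hcross h.1.1 g.1.1 u v hGadj.symm huv ⟨hlo.1, hPg.1, hPg.2⟩
        · exact hcross h.1.1 g.1.1 v u hGadj.symm huv.symm ⟨hlo.2, hPg.1, hPg.2⟩
      · rcases hPg with hPg | hPg
        · exact hcross u v g.1.1 h.1.1 huv hGadj ⟨hPg.1, hPg.2, hhi.2⟩
        · exact hcross v u g.1.1 h.1.1 huv.symm hGadj ⟨hPg.1, hPg.2, hhi.1⟩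
    obtain ⟨wk⟩ := hconn.preconnected ⟨⟨z, hzv⟩, fun h => hzu (congrArg Subtype.val h)⟩
      ⟨⟨t, htv⟩, fun h => htu (congrArg Subtype.val h)⟩
    have hPt := walk_invariant (fun s : {x : {w : V // w ≠ v} | x ≠ ⟨u, huv.ne⟩} =>
        (f u < f s.1.1 ∧ f s.1.1 < f v) ∨ (f v < f s.1.1 ∧ f s.1.1 < f u)) hstep wk hz
    simp only at hPt
    omega
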